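/- Let μ₁ ≥ ν₁ > 0 and μ₂ ≥ ν₂ > 0, and let S^{μ,ν}(t) be the anisotropic heat semigroup on Ḣ^s(𝕋³) given by the Fourier symbol e^{-(μ(k₁²+k₂²)+νk₃²)t}. Then for any φ ∈ [0,2], t ≥ 0 and q ∈ Ḣ^s(𝕋³): ‖(S^{μ₁,ν₁}(t) − S^{μ₂,ν₂}(t))q‖_{Ḣ^{s−φ}} ≤ C (|μ₁−μ₂| + |ν₁−ν₂|)^{φ/2} t^{φ/2} ‖q‖_{Ḣ^s}, with C uniform in φ ∈ [0,2]. -/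

import Mathlib

open scoped BigOperators Classical

/-- Euclidean norm of an integer lattice point in `ℤ³`. -/
noncomputable def nrm3 (k : Fin 3 → ℤ) : ℝ :=
  Real.sqrt (((k 0 : ℝ)) ^ 2 + ((k 1 : ℝ)) ^ 2 + ((k 2 : ℝ)) ^ 2)

/-- The squared `Ḣ^s(𝕋³)` norm of a function given through its Fourier coefficients. -/
noncomputable def hnormSq (s : ℝ) (q : (Fin 3 → ℤ) → ℂ) : ℝ :=
  ∑' k : Fin 3 → ℤ, nrm3 k ^ (2 * s) * ‖q k‖ ^ 2

/-- The anisotropic heat semigroup `S^{μ,ν}(t)`, acting on Fourier coefficients by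
multiplication with `exp(-(μ(k₁²+k₂²)+ν k₃²) t)`. -/
noncomputable def sg (μ ν t : ℝ) (q : (Fin 3 → ℤ) → ℂ) : (Fin 3 → ℤ) → ℂ := fun k =>
  (Real.exp (-(μ * (((k 0 : ℝ)) ^ 2 + ((k 1 : ℝ)) ^ 2) + ν * ((k 2 : ℝ)) ^ 2) * t) : ℝ) * q k

lemma nrm3_nonneg (k : Fin 3 → ℤ) : 0 ≤ nrm3 k := Real.sqrt_nonneg _

lemma nrm3_sq (k : Fin 3 → ℤ) :
    nrm3 k ^ 2 = ((k 0 : ℝ)) ^ 2 + ((k 1 : ℝ)) ^ 2 + ((k 2 : ℝ)) ^ 2 := by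
  rw [nrm3, Real.sq_sqrt (by positivity)]

lemma one_le_nrm3 {k : Fin 3 → ℤ} (hk : k ≠ 0) : 1 ≤ nrm3 k := by
  rw [nrm3, Real.one_le_sqrt]
  obtain ⟨i, hi⟩ := Function.ne_iff.1 hk
  have hi0 : k i ≠ 0 := by simpa using hi
  have sq1 : ∀ j : Fin 3, k j ≠ 0 → (1 : ℝ) ≤ ((k j : ℝ)) ^ 2 := by
    intro j hj
    have : (1 : ℤ) ≤ (k j) ^ 2 := by
      rcases lt_or_gt_of_ne hj with h | h <;> nlinarith
    exact_mod_cast this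
  have h3 : i = 0 ∨ i = 1 ∨ i = 2 := by omega
  rcases h3 with rfl | rfl | rfl
  · nlinarith [sq1 0 hi0, sq_nonneg ((k 1 : ℝ)), sq_nonneg ((k 2 : ℝ))]
  · nlinarith [sq1 1 hi0, sq_nonneg ((k 0 : ℝ)), sq_nonneg ((k 2 : ℝ))]
  · nlinarith [sq1 2 hi0, sq_nonneg ((k 0 : ℝ)), sq_nonneg ((k 1 : ℝ))]

lemma min_one_le_rpow {x θ : ℝ} (hx : 0 ≤ x) (h0 : 0 ≤ θ) (h1 : θ ≤ 1) :
    min 1 x ≤ x ^ θ := by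
  rcases le_or_gt x 1 with h | h
  · rw [min_eq_right h]
    rcases eq_or_lt_of_le hx with h0x | h0x
    · rcases eq_or_lt_of_le h0 with h0θ | h0θ
      · simp [← h0x, ← h0θ]
      · simp [← h0x, Real.zero_rpow (ne_of_gt h0θ)]
    · calc x = x ^ (1:ℝ) := (Real.rpow_one x).symm
        _ ≤ x ^ θ := Real.rpow_le_rpow_of_exponent_ge h0x h h1
  · rw [min_eq_left h.le]
    exact Real.one_le_rpow h.le h0

lemma exp_diff_le {a b t : ℝ} (ht : 0 ≤ t) (ha : 0 ≤ a) (hb : 0 ≤ b) :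
    |Real.exp (-a * t) - Real.exp (-b * t)| ≤ min 1 (|a - b| * t) := by
  wlog hab : a ≤ b generalizing a b
  · rw [abs_sub_comm, abs_sub_comm a b]; exact this hb ha (le_of_not_ge hab)
  have h1 : Real.exp (-b * t) ≤ Real.exp (-a * t) := Real.exp_le_exp.2 (by nlinarith)
  rw [abs_of_nonneg (by linarith), abs_of_nonpos (by linarith)]
  have heat : Real.exp (-a * t) ≤ 1 := Real.exp_le_one_iff.2 (by nlinarith)
  have hebt : 0 < Real.exp (-b * t) := Real.exp_pos _
  refine le_min (by linarith) ?_
  have hfac : Real.exp (-b * t) = Real.exp (-a * t) * Real.exp (-(b - a) * t) := by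
    rw [← Real.exp_add]; ring_nf
  have hx : 1 - Real.exp (-(b - a) * t) ≤ (b - a) * t := by
    have := Real.add_one_le_exp (-(b - a) * t); nlinarith
  have hx2 : Real.exp (-(b - a) * t) ≤ 1 := Real.exp_le_one_iff.2 (by nlinarith)
  have heat0 : 0 < Real.exp (-a * t) := Real.exp_pos _
  nlinarith

set_option maxHeartbeats 1000000 in
/-- Closedness of the anisotropic semigroups: for `μ₁ ≥ ν₁ > 0`, `μ₂ ≥ ν₂ > 0`,
`φ ∈ [0,2]` and `t ≥ 0`,
`‖(S^{μ₁,ν₁}(t) - S^{μ₂,ν₂}(t)) q‖_{Ḣ^{s-φ}} ≤ C (|μ₁-μ₂|+|ν₁-ν₂|)^{φ/2} t^{φ/2} ‖q‖_{Ḣ^s}`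
with `C` uniform in `φ ∈ [0,2]`. -/
theorem semigroup_difference :
    ∃ C > 0, ∀ φ : ℝ, 0 ≤ φ → φ ≤ 2 →
      ∀ μ₁ ν₁ μ₂ ν₂ s t : ℝ, ν₁ ≤ μ₁ → 0 < ν₁ → ν₂ ≤ μ₂ → 0 < ν₂ → 0 ≤ t →
        ∀ q : (Fin 3 → ℤ) → ℂ, q 0 = 0 →
          Summable (fun k : Fin 3 → ℤ => nrm3 k ^ (2 * s) * ‖q k‖ ^ 2) →
          Real.sqrt (hnormSq (s - φ) (fun k => sg μ₁ ν₁ t q k - sg μ₂ ν₂ t q k))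
            ≤ C * (|μ₁ - μ₂| + |ν₁ - ν₂|) ^ (φ / 2) * t ^ (φ / 2) * Real.sqrt (hnormSq s q) := by
  refine ⟨1, one_pos, ?_⟩
  intro φ hφ0 hφ2 μ₁ ν₁ μ₂ ν₂ s t hνμ₁ hν₁ hνμ₂ hν₂ ht q hq0 hsum
  set δ := |μ₁ - μ₂| + |ν₁ - ν₂| with hδdef
  have hδ0 : 0 ≤ δ := by positivity
  set M := (δ * t) ^ φ with hMdef
  have hM0 : 0 ≤ M := Real.rpow_nonneg (by positivity) _
  set D := fun k => sg μ₁ ν₁ t q k - sg μ₂ ν₂ t q k with hDdef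
  have key : ∀ k, nrm3 k ^ (2 * (s - φ)) * ‖D k‖ ^ 2
      ≤ M * (nrm3 k ^ (2 * s) * ‖q k‖ ^ 2) := by
    intro k
    rcases eq_or_ne k 0 with rfl | hk
    · have : D 0 = 0 := by simp [hDdef, sg, hq0]
      rw [this]
      have : (0:ℝ) ≤ nrm3 (0 : Fin 3 → ℤ) ^ (2 * s) * ‖q 0‖ ^ 2 := by
        have := nrm3_nonneg (0 : Fin 3 → ℤ)
        positivity
      simpa using mul_nonneg hM0 this
    · set n := nrm3 k with hn
      have hn1 : 1 ≤ n := one_le_nrm3 hk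
      have hn0 : 0 < n := lt_of_lt_of_le one_pos hn1
      set a := μ₁ * (((k 0 : ℝ)) ^ 2 + ((k 1 : ℝ)) ^ 2) + ν₁ * ((k 2 : ℝ)) ^ 2 with ha
      set b := μ₂ * (((k 0 : ℝ)) ^ 2 + ((k 1 : ℝ)) ^ 2) + ν₂ * ((k 2 : ℝ)) ^ 2 with hb
      have ha0 : 0 ≤ a := by
        rw [ha]
        nlinarith [sq_nonneg ((k 0 : ℝ)), sq_nonneg ((k 1 : ℝ)), sq_nonneg ((k 2 : ℝ))]
      have hb0 : 0 ≤ b := by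
        rw [hb]
        nlinarith [sq_nonneg ((k 0 : ℝ)), sq_nonneg ((k 1 : ℝ)), sq_nonneg ((k 2 : ℝ))]
      have habs : ‖D k‖ = |Real.exp (-a * t) - Real.exp (-b * t)| * ‖q k‖ := by
        have : D k = ((Real.exp (-a * t) - Real.exp (-b * t) : ℝ) : ℂ) * q k := by
          simp [hDdef, sg, ha, hb]; ring
        rw [this, norm_mul, Complex.norm_real, Real.norm_eq_abs]
      have hab : |a - b| ≤ δ * n ^ 2 := by
        have hsq : n ^ 2 = ((k 0 : ℝ)) ^ 2 + ((k 1 : ℝ)) ^ 2 + ((k 2 : ℝ)) ^ 2 := nrm3_sq k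
        have hm1 := le_abs_self (μ₁ - μ₂)
        have hm2 := neg_abs_le (μ₁ - μ₂)
        have hv1 := le_abs_self (ν₁ - ν₂)
        have hv2 := neg_abs_le (ν₁ - ν₂)
        have h0 := sq_nonneg ((k 0 : ℝ))
        have h1 := sq_nonneg ((k 1 : ℝ))
        have h2 := sq_nonneg ((k 2 : ℝ))
        rcases abs_cases (a - b) with ⟨he, _⟩ | ⟨he, _⟩ <;>
          rw [he, ha, hb, hsq, hδdef] <;> nlinarith
      have hexp : |Real.exp (-a * t) - Real.exp (-b * t)| ≤ (δ * n ^ 2 * t) ^ (φ / 2) := by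
        refine (exp_diff_le ht ha0 hb0).trans ?_
        refine le_trans (min_le_min_left 1 ?_) (min_one_le_rpow (by positivity) (by linarith) (by linarith))
        have : |a - b| * t ≤ δ * n ^ 2 * t := by nlinarith
        linarith
      have hsq2 : ‖D k‖ ^ 2 ≤ (δ * n ^ 2 * t) ^ φ * ‖q k‖ ^ 2 := by
        rw [habs, mul_pow]
        have hrw : ((δ * n ^ 2 * t) ^ (φ / 2)) ^ 2 = (δ * n ^ 2 * t) ^ φ := by
          rw [← Real.rpow_natCast ((δ * n ^ 2 * t) ^ (φ / 2)) 2, ← Real.rpow_mul (by positivity)]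
          norm_num
        rw [← hrw]
        gcongr
      have hsplit : (δ * n ^ 2 * t) ^ φ = M * n ^ (2 * φ) := by
        have h1 : δ * n ^ 2 * t = (δ * t) * n ^ 2 := by ring
        rw [h1, Real.mul_rpow (by positivity) (by positivity), hMdef]
        congr 1
        rw [← Real.rpow_natCast n 2, ← Real.rpow_mul hn0.le]
        norm_num [mul_comm]
      have hpow : n ^ (2 * (s - φ)) * n ^ (2 * φ) = n ^ (2 * s) := by
        rw [← Real.rpow_add hn0]; ring_nf
      calc n ^ (2 * (s - φ)) * ‖D k‖ ^ 2
          ≤ n ^ (2 * (s - φ)) * ((δ * n ^ 2 * t) ^ φ * ‖q k‖ ^ 2) := by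
            have : (0:ℝ) ≤ n ^ (2 * (s - φ)) := Real.rpow_nonneg hn0.le _
            exact mul_le_mul_of_nonneg_left hsq2 this
        _ = M * (n ^ (2 * s) * ‖q k‖ ^ 2) := by
            rw [hsplit, ← hpow]; ring
  have hsum2 : Summable (fun k => M * (nrm3 k ^ (2 * s) * ‖q k‖ ^ 2)) :=
    hsum.mul_left M
  have hsumA : Summable (fun k => nrm3 k ^ (2 * (s - φ)) * ‖D k‖ ^ 2) := by
    refine Summable.of_nonneg_of_le (fun k => ?_) key hsum2
    have := nrm3_nonneg k
    positivity
  have h1 : hnormSq (s - φ) D ≤ M * hnormSq s q := by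
    rw [hnormSq, hnormSq, ← tsum_mul_left]
    exact Summable.tsum_le_tsum key hsumA hsum2
  have hB0 : 0 ≤ hnormSq s q := by
    refine tsum_nonneg fun k => ?_
    have := nrm3_nonneg k
    positivity
  calc Real.sqrt (hnormSq (s - φ) D)
      ≤ Real.sqrt (M * hnormSq s q) := Real.sqrt_le_sqrt h1
    _ = Real.sqrt M * Real.sqrt (hnormSq s q) := Real.sqrt_mul hM0 _
    _ = 1 * δ ^ (φ / 2) * t ^ (φ / 2) * Real.sqrt (hnormSq s q) := by
        have : Real.sqrt M = δ ^ (φ / 2) * t ^ (φ / 2) := by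
          rw [hMdef, Real.sqrt_eq_rpow, ← Real.rpow_mul (by positivity),
            Real.mul_rpow hδ0 ht]
          rw [mul_one_div]
        rw [this]; ring
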